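/- Let p be a prime and u = b/a ∈ 𝔽_p(x) with a, b ∈ 𝔽_p[x], deg a ≤ d, deg b ≤ d, a(0) ≠ 0. Then a^p · u^{(p-1)} is a polynomial of degree less than d·p. Consequently, the p-th root s = (u^{(p-1)})^{1/p} ∈ 𝔽_p(x) satisfies: a·s is a polynomial of degree less than d. -/

import Mathlib

open Polynomial

/-- Entrywise derivative on rational functions over `ZMod p`:
`(num/denom)' = (num' * denom - num * denom') / denom^2`. -/
noncomputable def ratDeriv {p : ℕ} [Fact p.Prime] (f : RatFunc (ZMod p)) : RatFunc (ZMod p) :=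
  algebraMap (Polynomial (ZMod p)) (RatFunc (ZMod p))
      (derivative f.num * f.denom - f.num * derivative f.denom) /
    algebraMap (Polynomial (ZMod p)) (RatFunc (ZMod p)) (f.denom ^ 2)


private lemma wb_add_one_le {x : WithBot ℕ} {y : WithBot ℕ} (h : x < y) : x + 1 ≤ y := by
  cases x with
  | bot => simp
  | coe n =>
    cases y with
    | bot => exact absurd h (by simp)
    | coe m =>
      have hnm : n < m := by exact_mod_cast h
      rw [← WithBot.coe_one, ← WithBot.coe_add, WithBot.coe_le_coe]
      omega

private lemma ratDeriv_div {p : ℕ} [Fact p.Prime] (n m : Polynomial (ZMod p)) (hm : m ≠ 0) :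
    ratDeriv (algebraMap (Polynomial (ZMod p)) (RatFunc (ZMod p)) n /
        algebraMap (Polynomial (ZMod p)) (RatFunc (ZMod p)) m) =
      algebraMap (Polynomial (ZMod p)) (RatFunc (ZMod p)) (derivative n * m - n * derivative m) /
        algebraMap (Polynomial (ZMod p)) (RatFunc (ZMod p)) (m ^ 2) := by
  set f := algebraMap (Polynomial (ZMod p)) (RatFunc (ZMod p)) n /
      algebraMap (Polynomial (ZMod p)) (RatFunc (ZMod p)) m with hf
  have inj := RatFunc.algebraMap_injective (ZMod p)
  have hmap : ∀ q : Polynomial (ZMod p), q ≠ 0 →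
      algebraMap (Polynomial (ZMod p)) (RatFunc (ZMod p)) q ≠ 0 := fun q hq =>
    (map_ne_zero_iff _ inj).mpr hq
  have hD : f.denom ≠ 0 := f.denom_ne_zero
  have h0 : algebraMap (Polynomial (ZMod p)) (RatFunc (ZMod p)) f.num /
      algebraMap (Polynomial (ZMod p)) (RatFunc (ZMod p)) f.denom =
      algebraMap (Polynomial (ZMod p)) (RatFunc (ZMod p)) n /
      algebraMap (Polynomial (ZMod p)) (RatFunc (ZMod p)) m := by
    rw [RatFunc.num_div_denom]
  have key : f.num * m = n * f.denom := by
    apply inj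
    rw [map_mul, map_mul]
    exact (div_eq_div_iff (hmap _ hD) (hmap _ hm)).mp h0
  have key' : derivative f.num * m + f.num * derivative m =
      derivative n * f.denom + n * derivative f.denom := by
    have := congrArg derivative key
    simpa [derivative_mul] using this
  show algebraMap (Polynomial (ZMod p)) (RatFunc (ZMod p))
      (derivative f.num * f.denom - f.num * derivative f.denom) /
    algebraMap (Polynomial (ZMod p)) (RatFunc (ZMod p)) (f.denom ^ 2) = _
  rw [div_eq_div_iff (hmap _ (pow_ne_zero 2 hD)) (hmap _ (pow_ne_zero 2 hm)),
    ← map_mul, ← map_mul]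
  apply congrArg
  linear_combination (m * f.denom) * key' -
    (derivative f.denom * m + derivative m * f.denom) * key

private lemma key_iter {p : ℕ} [Fact p.Prime] (d : ℕ) (a b : Polynomial (ZMod p))
    (ha : a.natDegree ≤ d) (hb : b.natDegree ≤ d) (ha' : a ≠ 0) (k : ℕ) :
    ∃ c : Polynomial (ZMod p), c.degree + (k : WithBot ℕ) ≤ (((k + 1) * d : ℕ) : WithBot ℕ) ∧
      ratDeriv^[k] (algebraMap (Polynomial (ZMod p)) (RatFunc (ZMod p)) b /
          algebraMap (Polynomial (ZMod p)) (RatFunc (ZMod p)) a) =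
        algebraMap (Polynomial (ZMod p)) (RatFunc (ZMod p)) c /
          algebraMap (Polynomial (ZMod p)) (RatFunc (ZMod p)) (a ^ (k + 1)) := by
  have had : a.degree ≤ (d : WithBot ℕ) := degree_le_of_natDegree_le ha
  induction k with
  | zero =>
    refine ⟨b, ?_, by simp⟩
    simpa using degree_le_of_natDegree_le hb
  | succ k ih =>
    obtain ⟨c, hc, heq⟩ := ih
    refine ⟨derivative c * a - (((k + 1 : ℕ) : Polynomial (ZMod p))) * c * derivative a, ?_, ?_⟩
    · -- degree bound
      by_cases hc0 : c = 0
      · simp [hc0]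
      have h1 : (derivative c * a).degree + ((k + 1 : ℕ) : WithBot ℕ) ≤
          (((k + 2) * d : ℕ) : WithBot ℕ) := by
        calc (derivative c * a).degree + ((k + 1 : ℕ) : WithBot ℕ)
            ≤ (derivative c).degree + a.degree + ((k + 1 : ℕ) : WithBot ℕ) := by
              exact add_le_add_left (degree_mul_le _ _) _
          _ = ((derivative c).degree + 1) + ((k : ℕ) : WithBot ℕ) + a.degree := by
              push_cast; ring
          _ ≤ (c.degree + ((k : ℕ) : WithBot ℕ)) + (d : WithBot ℕ) := by
              gcongr
              exact wb_add_one_le (degree_derivative_lt hc0)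
          _ ≤ (((k + 1) * d : ℕ) : WithBot ℕ) + (d : WithBot ℕ) := by gcongr
          _ = (((k + 2) * d : ℕ) : WithBot ℕ) := by push_cast; ring
      have h2 : ((((k + 1 : ℕ) : Polynomial (ZMod p))) * c * derivative a).degree +
          ((k + 1 : ℕ) : WithBot ℕ) ≤ (((k + 2) * d : ℕ) : WithBot ℕ) := by
        calc ((((k + 1 : ℕ) : Polynomial (ZMod p))) * c * derivative a).degree +
              ((k + 1 : ℕ) : WithBot ℕ)
            ≤ (((k + 1 : ℕ) : Polynomial (ZMod p)) * c).degree + (derivative a).degree +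
              ((k + 1 : ℕ) : WithBot ℕ) := by
              exact add_le_add_left (degree_mul_le _ _) _
          _ ≤ (((k + 1 : ℕ) : Polynomial (ZMod p))).degree + c.degree + (derivative a).degree +
              ((k + 1 : ℕ) : WithBot ℕ) := by
              gcongr
              exact degree_mul_le _ _
          _ ≤ 0 + c.degree + (derivative a).degree + ((k + 1 : ℕ) : WithBot ℕ) := by
              gcongr
              exact degree_natCast_le _
          _ = (c.degree + ((k : ℕ) : WithBot ℕ)) + ((derivative a).degree + 1) := by
              push_cast; ring
          _ ≤ (((k + 1) * d : ℕ) : WithBot ℕ) + (d : WithBot ℕ) := by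
              gcongr
              exact (wb_add_one_le (degree_derivative_lt ha')).trans had
          _ = (((k + 2) * d : ℕ) : WithBot ℕ) := by push_cast; ring
      calc (derivative c * a - (((k + 1 : ℕ) : Polynomial (ZMod p))) * c * derivative a).degree +
            ((k + 1 : ℕ) : WithBot ℕ)
          ≤ max ((derivative c * a).degree)
              (((((k + 1 : ℕ) : Polynomial (ZMod p))) * c * derivative a).degree) +
              ((k + 1 : ℕ) : WithBot ℕ) := by
            exact add_le_add_left (degree_sub_le _ _) _
        _ ≤ (((k + 2) * d : ℕ) : WithBot ℕ) := by
            rw [← max_add_add_right]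
            exact max_le h1 h2
    · -- the iterate formula
      rw [Function.iterate_succ_apply', heq, ratDeriv_div _ _ (pow_ne_zero _ ha')]
      have inj := RatFunc.algebraMap_injective (ZMod p)
      have hmap : ∀ q : Polynomial (ZMod p), q ≠ 0 →
          algebraMap (Polynomial (ZMod p)) (RatFunc (ZMod p)) q ≠ 0 := fun q hq =>
        (map_ne_zero_iff _ inj).mpr hq
      rw [div_eq_div_iff (hmap _ (pow_ne_zero 2 (pow_ne_zero _ ha')))
        (hmap _ (pow_ne_zero _ ha')), ← map_mul, ← map_mul]
      apply congrArg
      rw [derivative_pow]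
      have : (k + 1) - 1 = k := rfl
      rw [this, C_eq_natCast]
      push_cast
      ring


/-- for `u = b/a` with `deg a ≤ d`, `deg b ≤ d`, `a(0) ≠ 0`,
the rational function `a^p · u^{(p-1)}` is a polynomial of degree `< d·p`; consequently for
the `p`-th root `s` of `u^{(p-1)}`, the product `a·s` is a polynomial of degree `< d`. -/
theorem stmt10 (p d : ℕ) [Fact p.Prime] (a b : Polynomial (ZMod p))
    (ha : a.natDegree ≤ d) (hb : b.natDegree ≤ d) (ha0 : a.eval 0 ≠ 0) :
    (∃ q : Polynomial (ZMod p), q.degree < ((d * p : ℕ) : WithBot ℕ) ∧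
      algebraMap (Polynomial (ZMod p)) (RatFunc (ZMod p)) (a ^ p) *
        ratDeriv^[p - 1]
          (algebraMap (Polynomial (ZMod p)) (RatFunc (ZMod p)) b /
            algebraMap (Polynomial (ZMod p)) (RatFunc (ZMod p)) a) =
      algebraMap (Polynomial (ZMod p)) (RatFunc (ZMod p)) q) ∧
    (∀ s : RatFunc (ZMod p),
      s ^ p = ratDeriv^[p - 1]
          (algebraMap (Polynomial (ZMod p)) (RatFunc (ZMod p)) b /
            algebraMap (Polynomial (ZMod p)) (RatFunc (ZMod p)) a) →
      ∃ q : Polynomial (ZMod p), q.degree < (d : WithBot ℕ) ∧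
        algebraMap (Polynomial (ZMod p)) (RatFunc (ZMod p)) a * s =
          algebraMap (Polynomial (ZMod p)) (RatFunc (ZMod p)) q) := by
  have hp : p.Prime := Fact.out
  have hp2 : 2 ≤ p := hp.two_le
  have hp1 : p - 1 + 1 = p := Nat.succ_pred_eq_of_pos hp.pos
  have ha' : a ≠ 0 := fun h => ha0 (by simp [h])
  have inj := RatFunc.algebraMap_injective (ZMod p)
  have hmap : ∀ q : Polynomial (ZMod p), q ≠ 0 →
      algebraMap (Polynomial (ZMod p)) (RatFunc (ZMod p)) q ≠ 0 := fun q hq =>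
    (map_ne_zero_iff _ inj).mpr hq
  obtain ⟨c, hc, heq⟩ := key_iter d a b ha hb ha' (p - 1)
  rw [hp1] at hc heq
  -- useful degree fact for c
  have hcdeg : c.degree + ((p - 1 : ℕ) : WithBot ℕ) ≤ ((p * d : ℕ) : WithBot ℕ) := hc
  constructor
  · refine ⟨c, ?_, ?_⟩
    · cases hcd : c.degree with
      | bot => exact WithBot.bot_lt_coe _
      | coe n =>
        rw [hcd] at hcdeg
        have h1 : ((n + (p - 1) : ℕ) : WithBot ℕ) ≤ ((p * d : ℕ) : WithBot ℕ) := by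
          rw [Nat.cast_add]; exact hcdeg
        have h2 : n + (p - 1) ≤ p * d := by
          rwa [Nat.cast_withBot, Nat.cast_withBot, WithBot.coe_le_coe] at h1
        have h3 : n < d * p := by
          rw [mul_comm d p]
          calc n < n + (p - 1) := by omega
            _ ≤ p * d := h2
        exact WithBot.coe_lt_coe.mpr h3
    · rw [heq, mul_div_assoc']
      rw [mul_comm]
      rw [mul_div_assoc]
      rw [div_self (hmap _ (pow_ne_zero _ ha')), mul_one]
  · intro s hs
    rw [heq] at hs
    set t := algebraMap (Polynomial (ZMod p)) (RatFunc (ZMod p)) a * s with ht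
    have htp : t ^ p = algebraMap (Polynomial (ZMod p)) (RatFunc (ZMod p)) c := by
      rw [ht, mul_pow, hs, ← map_pow, mul_div_assoc', mul_comm, mul_div_assoc,
        div_self (hmap _ (pow_ne_zero _ ha')), mul_one]
    -- t is integral over the polynomial ring, hence a polynomial
    have hint : IsIntegral (Polynomial (ZMod p)) t := by
      refine ⟨X ^ p - C c, monic_X_pow_sub_C c hp.ne_zero, ?_⟩
      simp [Polynomial.eval₂_sub, htp]
    obtain ⟨q, hq⟩ := IsIntegrallyClosed.isIntegral_iff.mp hint
    have hqp : q ^ p = c := by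
      apply inj
      rw [map_pow, hq, htp]
    refine ⟨q, ?_, hq.symm⟩
    by_cases hq0 : q = 0
    · rw [hq0, degree_zero]
      exact WithBot.bot_lt_coe _
    · have hc0 : c ≠ 0 := fun h => hq0 (pow_eq_zero_iff hp.ne_zero |>.mp (hqp.trans h))
      have hnd : c.natDegree = p * q.natDegree := by
        rw [← hqp, natDegree_pow]
      rw [degree_eq_natDegree hc0, hnd] at hcdeg
      have h1 : ((p * q.natDegree + (p - 1) : ℕ) : WithBot ℕ) ≤ ((p * d : ℕ) : WithBot ℕ) := by
        rw [Nat.cast_add]; exact hcdeg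
      have hnat : p * q.natDegree + (p - 1) ≤ p * d := by
        rwa [Nat.cast_withBot, Nat.cast_withBot, WithBot.coe_le_coe] at h1
      have hlt : q.natDegree < d := by
        refine Nat.lt_of_mul_lt_mul_left (a := p) ?_
        calc p * q.natDegree < p * q.natDegree + (p - 1) := by omega
          _ ≤ p * d := hnat
      rw [degree_eq_natDegree hq0, Nat.cast_withBot, Nat.cast_withBot, WithBot.coe_lt_coe]
      exact hlt
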